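/- For every real t, h((1 − cos t)/2) + h((1 − sin t)/2) ≥ 1, where h is the binary entropy function h(s) = −s·log₂ s − (1−s)·log₂(1−s) (with 0·log₂ 0 = 0). Equality holds at t = 0. -/

import Mathlib

/-- The binary entropy function `h(s) = −s·log₂ s − (1−s)·log₂(1−s)`
(with the convention `0·log₂ 0 = 0`). -/
noncomputable def binEnt (s : ℝ) : ℝ :=
  -s * Real.logb 2 s - (1 - s) * Real.logb 2 (1 - s)


noncomputable def Ffun (x : ℝ) : ℝ := 2*Real.log 2 * x^2 - (1+x)*Real.log (1+x) - (1-x)*Real.log (1-x)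
noncomputable def Gfun (x : ℝ) : ℝ := 4*Real.log 2 * x - Real.log (1+x) + Real.log (1-x)

lemma hF (x : ℝ) (h1 : -1 < x) (h2 : x < 1) : HasDerivAt Ffun (Gfun x) x := by
  have hp : (0:ℝ) < 1 + x := by linarith
  have hm : (0:ℝ) < 1 - x := by linarith
  have da : HasDerivAt (fun x : ℝ => 1 + x) 1 x := by
    simpa using (hasDerivAt_id x).const_add 1
  have db : HasDerivAt (fun x : ℝ => 1 - x) (-1) x := by
    simpa using (hasDerivAt_id x).const_sub 1
  have la : HasDerivAt (fun x : ℝ => Real.log (1+x)) (1/(1+x)) x := by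
    simpa [Function.comp_def] using (Real.hasDerivAt_log hp.ne').comp x da
  have lb : HasDerivAt (fun x : ℝ => Real.log (1-x)) (-(1/(1-x))) x := by
    simpa [Function.comp_def] using (Real.hasDerivAt_log hm.ne').comp x db
  have d1 : HasDerivAt (fun x : ℝ => (1+x)*Real.log (1+x)) (Real.log (1+x) + 1) x := by
    have := da.mul la
    refine this.congr_deriv ?_
    field_simp
  have d2 : HasDerivAt (fun x : ℝ => (1-x)*Real.log (1-x)) (-Real.log (1-x) - 1) x := by
    have := db.mul lb
    refine this.congr_deriv ?_
    field_simp
    ring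
  have d0 : HasDerivAt (fun x : ℝ => 2*Real.log 2 * x^2) (4*Real.log 2 * x) x := by
    have := (hasDerivAt_pow 2 x).const_mul (2*Real.log 2)
    refine this.congr_deriv ?_
    ring
  have := (d0.sub d1).sub d2
  refine this.congr_deriv ?_
  unfold Gfun; ring

lemma hG (x : ℝ) (h1 : -1 < x) (h2 : x < 1) :
    HasDerivAt Gfun (4*Real.log 2 - 1/(1+x) - 1/(1-x)) x := by
  have hp : (0:ℝ) < 1 + x := by linarith
  have hm : (0:ℝ) < 1 - x := by linarith
  have da : HasDerivAt (fun x : ℝ => 1 + x) 1 x := by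
    simpa using (hasDerivAt_id x).const_add 1
  have db : HasDerivAt (fun x : ℝ => 1 - x) (-1) x := by
    simpa using (hasDerivAt_id x).const_sub 1
  have la : HasDerivAt (fun x : ℝ => Real.log (1+x)) (1/(1+x)) x := by
    simpa [Function.comp_def] using (Real.hasDerivAt_log hp.ne').comp x da
  have lb : HasDerivAt (fun x : ℝ => Real.log (1-x)) (-(1/(1-x))) x := by
    simpa [Function.comp_def] using (Real.hasDerivAt_log hm.ne').comp x db
  have d0 : HasDerivAt (fun x : ℝ => 4*Real.log 2 * x) (4*Real.log 2) x := by
    simpa using (hasDerivAt_id x).const_mul (4*Real.log 2)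
  have := (d0.sub la).add lb
  refine this.congr_deriv ?_
  ring

lemma log2_large : (1:ℝ)/2 < Real.log 2 := by
  have := Real.log_two_gt_d9
  linarith

lemma Fcont : Continuous Ffun := by
  unfold Ffun
  have h1 : Continuous fun x : ℝ => (1+x)*Real.log (1+x) :=
    Real.continuous_mul_log.comp (continuous_const.add continuous_id)
  have h2 : Continuous fun x : ℝ => (1-x)*Real.log (1-x) :=
    Real.continuous_mul_log.comp (continuous_const.sub continuous_id)
  exact ((continuous_const.mul (continuous_pow 2)).sub h1).sub h2

lemma F0 : Ffun 0 = 0 := by simp [Ffun]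

lemma F1 : Ffun 1 = 0 := by norm_num [Ffun]

lemma G0 : Gfun 0 = 0 := by simp [Gfun]

noncomputable def aval : ℝ := Real.sqrt (1 - 1/(2*Real.log 2))

lemma aval_sq : aval^2 = 1 - 1/(2*Real.log 2) := by
  have h : (0:ℝ) ≤ 1 - 1/(2*Real.log 2) := by
    have := log2_large
    have h2 : (1:ℝ) < 2*Real.log 2 := by linarith
    have : 1/(2*Real.log 2) < 1 := by
      rw [div_lt_one (by linarith)]; exact h2
    linarith
  rw [aval, Real.sq_sqrt h]

lemma aval_pos : 0 < aval := by
  apply Real.sqrt_pos.mpr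
  have := log2_large
  have h2 : (1:ℝ) < 2*Real.log 2 := by linarith
  have : 1/(2*Real.log 2) < 1 := by
    rw [div_lt_one (by linarith)]; exact h2
  linarith

lemma aval_lt_one : aval < 1 := by
  have hsq := aval_sq
  have h0 := aval_pos
  have hl := log2_large
  have hpos : 0 < 1/(2*Real.log 2) := by positivity
  nlinarith [hsq, h0, hpos]

lemma F_nonneg : ∀ x ∈ Set.Icc (0:ℝ) 1, 0 ≤ Ffun x := by
  have hl2 := log2_large
  have ha0 := aval_pos
  have ha1 := aval_lt_one
  have hsq := aval_sq
  -- G is nonneg on [0, aval]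
  have hGmono : MonotoneOn Gfun (Set.Icc 0 aval) := by
    apply monotoneOn_of_deriv_nonneg (convex_Icc _ _)
    · intro x hx
      exact (hG x (by linarith [hx.1]) (by linarith [hx.2])).continuousAt.continuousWithinAt
    · rw [interior_Icc]
      intro x hx
      exact (hG x (by linarith [hx.1]) (by linarith [hx.2])).differentiableAt.differentiableWithinAt
    · rw [interior_Icc]
      intro x hx
      rw [(hG x (by linarith [hx.1]) (by linarith [hx.2])).deriv]
      have hx1 : x < 1 := lt_trans hx.2 ha1
      have hp : (0:ℝ) < 1 + x := by linarith [hx.1]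
      have hm : (0:ℝ) < 1 - x := by linarith
      have hxa : x^2 < aval^2 := by
        apply pow_lt_pow_left₀ hx.2 (le_of_lt hx.1)
        norm_num
      have h12 : (1:ℝ) - x^2 ≠ 0 := by nlinarith
      have key : 1/(1+x) + 1/(1-x) = 2/(1-x^2) := by
        field_simp
        ring
      have h1 : 1/(2*Real.log 2) < 1 - x^2 := by
        rw [hsq] at hxa; linarith
      have h2 : 2/(1-x^2) < 4*Real.log 2 := by
        rw [div_lt_iff₀ (by nlinarith)]
        have : 0 < 2*Real.log 2 := by linarith
        rw [div_lt_iff₀ this] at h1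
        nlinarith
      linarith [key ▸ h2]
  have hGnonneg : ∀ x ∈ Set.Icc (0:ℝ) aval, 0 ≤ Gfun x := by
    intro x hx
    have := hGmono (Set.left_mem_Icc.mpr ha0.le) hx hx.1
    rwa [G0] at this
  -- F is monotone on [0, aval]
  have hFmono : MonotoneOn Ffun (Set.Icc 0 aval) := by
    apply monotoneOn_of_deriv_nonneg (convex_Icc _ _) Fcont.continuousOn
    · rw [interior_Icc]
      intro x hx
      exact (hF x (by linarith [hx.1]) (by linarith [hx.2, ha1])).differentiableAt.differentiableWithinAt
    · rw [interior_Icc]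
      intro x hx
      rw [(hF x (by linarith [hx.1]) (by linarith [hx.2, ha1])).deriv]
      exact hGnonneg x ⟨hx.1.le, hx.2.le⟩
  have hFa : ∀ x ∈ Set.Icc (0:ℝ) aval, 0 ≤ Ffun x := by
    intro x hx
    have := hFmono (Set.left_mem_Icc.mpr ha0.le) hx hx.1
    rwa [F0] at this
  -- F is concave on [aval, 1]
  have hFconc : ConcaveOn ℝ (Set.Icc aval 1) Ffun := by
    apply concaveOn_of_deriv2_nonpos (convex_Icc _ _) Fcont.continuousOn
    · rw [interior_Icc]
      intro x hx
      exact (hF x (by linarith [hx.1, ha0]) hx.2).differentiableAt.differentiableWithinAt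
    · rw [interior_Icc]
      intro x hx
      have hd2 : HasDerivAt (deriv Ffun) (4*Real.log 2 - 1/(1+x) - 1/(1-x)) x := by
        apply (hG x (by linarith [hx.1, ha0]) hx.2).congr_of_eventuallyEq
        have hopen : Set.Ioo (-1:ℝ) 1 ∈ nhds x :=
          (isOpen_Ioo).mem_nhds ⟨by linarith [hx.1, ha0], hx.2⟩
        filter_upwards [hopen] with y hy
        exact (hF y hy.1 hy.2).deriv
      exact hd2.differentiableAt.differentiableWithinAt
    · rw [interior_Icc]
      intro x hx
      have hd2 : HasDerivAt (deriv Ffun) (4*Real.log 2 - 1/(1+x) - 1/(1-x)) x := by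
        apply (hG x (by linarith [hx.1, ha0]) hx.2).congr_of_eventuallyEq
        have hopen : Set.Ioo (-1:ℝ) 1 ∈ nhds x :=
          (isOpen_Ioo).mem_nhds ⟨by linarith [hx.1, ha0], hx.2⟩
        filter_upwards [hopen] with y hy
        exact (hF y hy.1 hy.2).deriv
      have : deriv^[2] Ffun x = 4*Real.log 2 - 1/(1+x) - 1/(1-x) := by
        rw [show deriv^[2] Ffun = deriv (deriv Ffun) from rfl]
        exact hd2.deriv
      rw [this]
      have hp : (0:ℝ) < 1 + x := by linarith [hx.1, ha0]
      have hm : (0:ℝ) < 1 - x := by linarith [hx.2]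
      have hxa : aval^2 < x^2 := by
        apply pow_lt_pow_left₀ hx.1 ha0.le
        norm_num
      have h12 : (1:ℝ) - x^2 ≠ 0 := by nlinarith
      have key : 1/(1+x) + 1/(1-x) = 2/(1-x^2) := by
        field_simp
        ring
      have h1 : 1 - x^2 < 1/(2*Real.log 2) := by
        rw [hsq] at hxa; linarith
      have h2 : 4*Real.log 2 < 2/(1-x^2) := by
        rw [lt_div_iff₀ (by nlinarith)]
        have h3 : 0 < 2*Real.log 2 := by linarith
        rw [lt_div_iff₀ h3] at h1
        nlinarith
      linarith [key ▸ h2]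
  intro x hx
  rcases le_total x aval with h | h
  · exact hFa x ⟨hx.1, h⟩
  · have hseg : x ∈ segment ℝ aval 1 := by
      rw [segment_eq_Icc ha1.le]
      exact ⟨h, hx.2⟩
    have := hFconc.ge_on_segment (Set.left_mem_Icc.mpr ha1.le)
      (Set.right_mem_Icc.mpr ha1.le) hseg
    have hFa' : 0 ≤ Ffun aval := hFa aval ⟨ha0.le, le_refl _⟩
    rw [F1] at this
    exact le_trans (le_min hFa' le_rfl) this




lemma binEnt_symm (s : ℝ) : binEnt (1 - s) = binEnt s := by
  unfold binEnt
  ring_nf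

lemma binEnt_ge (x : ℝ) (h1 : -1 ≤ x) (h2 : x ≤ 1) : 1 - x^2 ≤ binEnt ((1-x)/2) := by
  have hlog2 : (0:ℝ) < Real.log 2 := Real.log_pos (by norm_num)
  -- main case for 0 ≤ x ≤ 1
  have main : ∀ y : ℝ, 0 ≤ y → y ≤ 1 → 1 - y^2 ≤ binEnt ((1-y)/2) := by
    intro y hy0 hy1
    rcases eq_or_lt_of_le hy1 with rfl | hy1
    · norm_num [binEnt]
    · have hp : (0:ℝ) < 1 + y := by linarith
      have hm : (0:ℝ) < 1 - y := by linarith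
      have hFnn := F_nonneg y ⟨hy0, hy1.le⟩
      unfold Ffun at hFnn
      have key : binEnt ((1-y)/2)
          = 1 - ((1-y)*Real.log (1-y) + (1+y)*Real.log (1+y))/(2*Real.log 2) := by
        unfold binEnt Real.logb
        rw [show (1:ℝ) - (1-y)/2 = (1+y)/2 by ring,
          Real.log_div hm.ne' two_ne_zero, Real.log_div hp.ne' two_ne_zero]
        field_simp
        ring
      rw [key]
      have hdiv : ((1-y)*Real.log (1-y) + (1+y)*Real.log (1+y))/(2*Real.log 2) ≤ y^2 := by
        rw [div_le_iff₀ (by positivity)]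
        nlinarith [hFnn]
      linarith
  rcases le_total 0 x with h | h
  · exact main x h h2
  · have := main (-x) (by linarith) (by linarith)
    have heq : binEnt ((1-(-x))/2) = binEnt ((1-x)/2) := by
      rw [show (1-(-x))/2 = 1 - (1-x)/2 by ring, binEnt_symm]
    rw [heq] at this
    simpa using this


/-- For every real `t`,
`h((1 − cos t)/2) + h((1 − sin t)/2) ≥ 1`, with equality at `t = 0`. -/
theorem binEnt_cos_add_binEnt_sin_ge_one (t : ℝ) :
    1 ≤ binEnt ((1 - Real.cos t) / 2) + binEnt ((1 - Real.sin t) / 2) ∧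
      binEnt ((1 - Real.cos 0) / 2) + binEnt ((1 - Real.sin 0) / 2) = 1 := by
  constructor
  · have hc := binEnt_ge (Real.cos t) (Real.neg_one_le_cos t) (Real.cos_le_one t)
    have hs := binEnt_ge (Real.sin t) (Real.neg_one_le_sin t) (Real.sin_le_one t)
    have hpyth := Real.sin_sq_add_cos_sq t
    nlinarith [hc, hs]
  · rw [Real.cos_zero, Real.sin_zero]
    have h1 : binEnt ((1 - (1:ℝ))/2) = 0 := by norm_num [binEnt]
    have h2 : binEnt ((1 - (0:ℝ))/2) = 1 := by
      have hl : Real.logb 2 (1/2 : ℝ) = -1 := by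
        rw [one_div, Real.logb_inv, Real.logb_self_eq_one (by norm_num)]
      unfold binEnt
      norm_num [hl]
    rw [h1, h2]
    ring
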